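/- Let V : ℝ^d → ℝ be differentiable with L-Lipschitz gradient, and let α > 0, β > 0, θ ∈ ℝ^d, ξ ∈ ℝ^d satisfy V(θ) ≤ 0 and α V(θ) + ∇V(θ)ᵀξ + (β/2)‖ξ‖² ≤ 0. If 0 ≤ h ≤ min{1/α, β/L}, then V(θ + h ξ) ≤ 0. (One step of the discretized robust safe gradient flow preserves safety.) -/

import Mathlib

open InnerProductSpace intervalIntegral

/-- One step of the discretized robust safe gradient flow preserves safety. -/
theorem rsgf_step_safe {d : ℕ}
    (V : EuclideanSpace ℝ (Fin d) → ℝ) (g : EuclideanSpace ℝ (Fin d) → EuclideanSpace ℝ (Fin d))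
    (hV : ∀ x, HasGradientAt V (g x) x)
    (L : ℝ) (hL : 0 < L) (hlip : ∀ x y, ‖g x - g y‖ ≤ L * ‖x - y‖)
    (α β : ℝ) (hα : 0 < α) (hβ : 0 < β)
    (θ ξ : EuclideanSpace ℝ (Fin d))
    (hsafe : V θ ≤ 0)
    (hcon : α * V θ + ⟪g θ, ξ⟫_ℝ + β / 2 * ‖ξ‖ ^ 2 ≤ 0)
    (h : ℝ) (hh0 : 0 ≤ h) (hh : h ≤ min (1 / α) (β / L)) :
    V (θ + h • ξ) ≤ 0 := by
  have hgcont : Continuous g := by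
    rw [Metric.continuous_iff]
    intro b ε hε
    exact ⟨ε / L, by positivity, fun a ha => by
      have := hlip a b
      rw [dist_eq_norm] at *
      calc ‖g a - g b‖ ≤ L * ‖a - b‖ := this
        _ < L * (ε / L) := by exact mul_lt_mul_of_pos_left ha hL
        _ = ε := by field_simp⟩
  set φ' : ℝ → ℝ := fun t => ⟪g (θ + t • ξ), ξ⟫_ℝ with hφ'
  have hderiv : ∀ t : ℝ, HasDerivAt (fun t : ℝ => V (θ + t • ξ)) (φ' t) t := by
    intro t
    have h1 : HasDerivAt (fun t : ℝ => θ + t • ξ) ξ t := by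
      simpa using ((hasDerivAt_id t).smul_const ξ).const_add θ
    have h2 := (hV (θ + t • ξ)).hasFDerivAt
    have := h2.comp_hasDerivAt t h1
    exact this.congr_deriv (by simp [hφ', real_inner_comm])
  have hcont : Continuous φ' := by
    apply Continuous.inner ?_ continuous_const
    exact hgcont.comp (by continuity)
  have hint : V (θ + h • ξ) - V (θ + (0:ℝ) • ξ) = ∫ t in (0:ℝ)..h, φ' t :=
    (integral_eq_sub_of_hasDerivAt (fun t _ => hderiv t)
      (hcont.intervalIntegrable 0 h)).symm
  have hbound : ∀ t ∈ Set.Icc (0:ℝ) h, φ' t ≤ ⟪g θ, ξ⟫_ℝ + L * t * ‖ξ‖ ^ 2 := by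
    intro t ht
    have : φ' t - ⟪g θ, ξ⟫_ℝ = ⟪g (θ + t • ξ) - g θ, ξ⟫_ℝ := by
      rw [inner_sub_left]
    have hcs : ⟪g (θ + t • ξ) - g θ, ξ⟫_ℝ ≤ ‖g (θ + t • ξ) - g θ‖ * ‖ξ‖ :=
      real_inner_le_norm _ _
    have hl : ‖g (θ + t • ξ) - g θ‖ ≤ L * (t * ‖ξ‖) := by
      have := hlip (θ + t • ξ) θ
      simpa [norm_smul, abs_of_nonneg ht.1] using this
    nlinarith [norm_nonneg ξ, norm_nonneg (g (θ + t • ξ) - g θ), ht.1, this, hcs]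
  have hintle : (∫ t in (0:ℝ)..h, φ' t)
      ≤ ∫ t in (0:ℝ)..h, (⟪g θ, ξ⟫_ℝ + L * t * ‖ξ‖ ^ 2) := by
    apply integral_mono_on hh0 (hcont.intervalIntegrable 0 h)
      ((continuous_const.add ((continuous_const.mul continuous_id).mul continuous_const) : Continuous fun t : ℝ => ⟪g θ, ξ⟫_ℝ + L * t * ‖ξ‖ ^ 2).intervalIntegrable 0 h)
    exact hbound
  have hival : (∫ t in (0:ℝ)..h, (⟪g θ, ξ⟫_ℝ + L * t * ‖ξ‖ ^ 2))
      = h * ⟪g θ, ξ⟫_ℝ + L * (h ^ 2 / 2) * ‖ξ‖ ^ 2 := by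
    rw [integral_add (intervalIntegrable_const)
      ((by fun_prop : Continuous fun t : ℝ => L * t * ‖ξ‖ ^ 2).intervalIntegrable 0 h)]
    simp only [integral_const, smul_eq_mul, sub_zero]
    have : (∫ t in (0:ℝ)..h, L * t * ‖ξ‖ ^ 2) = L * ‖ξ‖ ^ 2 * ∫ t in (0:ℝ)..h, t := by
      rw [← integral_const_mul]
      congr 1; ext t; ring
    rw [this, integral_id]
    ring
  have hup : V (θ + h • ξ) ≤ V θ + h * ⟪g θ, ξ⟫_ℝ + L * (h ^ 2 / 2) * ‖ξ‖ ^ 2 := by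
    have := hint
    simp only [zero_smul, add_zero] at this
    linarith [hintle, hival.le, hival.ge, this.le, this.ge]
  have h1 : h * α ≤ 1 := by
    have := (le_min_iff.mp hh).1
    rw [le_div_iff₀ hα] at this; linarith
  have h2 : L * h ≤ β := by
    have := (le_min_iff.mp hh).2
    rw [le_div_iff₀ hL] at this; linarith [this]
  have hinner : h * ⟪g θ, ξ⟫_ℝ ≤ h * (-(α * V θ) - β / 2 * ‖ξ‖ ^ 2) := by
    apply mul_le_mul_of_nonneg_left _ hh0
    linarith
  nlinarith [mul_nonneg (sub_nonneg.mpr h1) (neg_nonneg.mpr hsafe), mul_nonneg (mul_nonneg hh0 (sub_nonneg.mpr h2)) (sq_nonneg ‖ξ‖)]
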